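/- Let G be a connected graph, α ∈ [0,1), and X a unit eigenvector of A_α(G) for the spectral radius. Suppose v₁u₁ and v₂u₂ are edges of G while v₁v₂ and u₁u₂ are non-edges. Let G' be obtained from G by deleting the edges v₁u₁, v₂u₂ and adding the edges v₁v₂, u₁u₂. If x_{v₁} ≥ x_{u₂} and x_{v₂} ≥ x_{u₁}, then ρ(A_α(G')) ≥ ρ(A_α(G)); moreover if at least one of these two inequalities is strict, then ρ(A_α(G')) > ρ(A_α(G)). -/

import Mathlib

open Matrix Finset SimpleGraph
open scoped Classical

/-- Degree of a vertex (no decidability assumptions). -/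
noncomputable def deg {V : Type*} (G : SimpleGraph V) (v : V) : ℕ :=
  (G.neighborSet v).ncard

/-- The matrix `A_alpha(G) = alpha D(G) + (1-alpha) A(G)`. -/
noncomputable def Aalpha {V : Type*} [Fintype V] (G : SimpleGraph V) (α : ℝ) :
    Matrix V V ℝ :=
  fun i j => if i = j then α * (deg G i : ℝ) else if G.Adj i j then 1 - α else 0

/-- The spectral radius (largest eigenvalue) of a real symmetric matrix,
as the supremum of its eigenvalues. -/
noncomputable def specRad {V : Type*} [Fintype V] (M : Matrix V V ℝ) : ℝ :=
  sSup {t : ℝ | ∃ x : V → ℝ, x ≠ 0 ∧ M.mulVec x = t • x}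

lemma dot_self_nonneg {n : ℕ} (x : Fin n → ℝ) : 0 ≤ x ⬝ᵥ x :=
  Finset.sum_nonneg fun i _ => mul_self_nonneg _

lemma dot_self_pos {n : ℕ} {x : Fin n → ℝ} (hx : x ≠ 0) : 0 < x ⬝ᵥ x := by
  have h0 : x ⬝ᵥ x ≠ 0 := (dotProduct_self_eq_zero (v := x)).not.mpr hx
  exact lt_of_le_of_ne (dot_self_nonneg x) (Ne.symm h0)

lemma mulVec_dot_comm {n : ℕ} (U : Matrix (Fin n) (Fin n) ℝ) (y z : Fin n → ℝ) :
    (U *ᵥ y) ⬝ᵥ z = y ⬝ᵥ (star U *ᵥ z) := by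
  simp only [Matrix.mulVec, dotProduct, Matrix.star_apply, star_trivial,
    Finset.sum_mul, Finset.mul_sum]
  rw [Finset.sum_comm]
  apply Finset.sum_congr rfl; intro i _; apply Finset.sum_congr rfl; intro j _; ring

lemma spec_main {n : ℕ} (hn : 0 < n) {M : Matrix (Fin n) (Fin n) ℝ} (hM : M.IsHermitian) :
    ∀ x : Fin n → ℝ, x ⬝ᵥ x = 1 → x ⬝ᵥ (M *ᵥ x) ≤ specRad M ∧
      (specRad M ≤ x ⬝ᵥ (M *ᵥ x) → M *ᵥ x = specRad M • x) := by
  haveI : Nonempty (Fin n) := ⟨⟨0, hn⟩⟩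
  set U : Matrix (Fin n) (Fin n) ℝ := (hM.eigenvectorUnitary : Matrix (Fin n) (Fin n) ℝ) with hU
  set μ : Fin n → ℝ := hM.eigenvalues with hμ
  have hUU : U * star U = 1 := (Matrix.mem_unitaryGroup_iff).mp hM.eigenvectorUnitary.2
  have hsUU : star U * U = 1 := (Matrix.mem_unitaryGroup_iff').mp hM.eigenvectorUnitary.2
  have hspec : M = U * Matrix.diagonal μ * star U := by
    have := hM.spectral_theorem
    simpa using this
  -- recovery
  have hrec : ∀ y : Fin n → ℝ, U *ᵥ (star U *ᵥ y) = y := by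
    intro y; rw [Matrix.mulVec_mulVec, hUU, Matrix.one_mulVec]
  have hrec' : ∀ y : Fin n → ℝ, star U *ᵥ (U *ᵥ y) = y := by
    intro y; rw [Matrix.mulVec_mulVec, hsUU, Matrix.one_mulVec]
  -- M *ᵥ y in terms of c := star U *ᵥ y
  have dot_mulVec_left : ∀ y z : Fin n → ℝ, y ⬝ᵥ (U *ᵥ z) = (star U *ᵥ y) ⬝ᵥ z := by
    intro y z
    rw [dotProduct_comm, mulVec_dot_comm, dotProduct_comm]
  have hMy : ∀ y : Fin n → ℝ, M *ᵥ y = U *ᵥ (Matrix.diagonal μ *ᵥ (star U *ᵥ y)) := by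
    intro y
    rw [Matrix.mulVec_mulVec, Matrix.mulVec_mulVec, ← hspec]
  have hdiag : ∀ c : Fin n → ℝ, c ⬝ᵥ (Matrix.diagonal μ *ᵥ c) = ∑ i, μ i * c i ^ 2 := by
    intro c
    simp [Matrix.mulVec_diagonal, dotProduct]
    apply Finset.sum_congr rfl; intro i _; ring
  have hquad : ∀ y : Fin n → ℝ, y ⬝ᵥ (M *ᵥ y) = ∑ i, μ i * (star U *ᵥ y) i ^ 2 := by
    intro y
    rw [hMy y, dot_mulVec_left, hdiag]
  have hnorm : ∀ y : Fin n → ℝ, y ⬝ᵥ y = ∑ i, (star U *ᵥ y) i ^ 2 := by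
    intro y
    have : y ⬝ᵥ y = y ⬝ᵥ (U *ᵥ (star U *ᵥ y)) := by rw [hrec]
    rw [this, dot_mulVec_left]
    simp [dotProduct]
    apply Finset.sum_congr rfl; intro i _; ring
  set S := {t : ℝ | ∃ x : Fin n → ℝ, x ≠ 0 ∧ M *ᵥ x = t • x} with hS
  set T := Finset.univ.sup' Finset.univ_nonempty μ with hT
  have hμT : ∀ i, μ i ≤ T := fun i => Finset.le_sup' μ (Finset.mem_univ i)
  have heig : ∀ i, μ i ∈ S := by
    intro i
    refine ⟨U *ᵥ Pi.single i 1, ?_, ?_⟩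
    · intro h0
      have h2 : star U *ᵥ (U *ᵥ Pi.single i 1) = 0 := by rw [h0, Matrix.mulVec_zero]
      rw [hrec'] at h2
      exact one_ne_zero (α := ℝ) (by simpa using congrFun h2 i)
    · rw [hMy, hrec', Matrix.diagonal_mulVec_single, mul_one]
      have : (Pi.single i (μ i) : Fin n → ℝ) = μ i • (Pi.single i (1:ℝ) : Fin n → ℝ) := by
        ext j; by_cases h : j = i <;> simp [h, Pi.single_apply]
      rw [this, Matrix.mulVec_smul]
  have hbound : ∀ t ∈ S, t ≤ T := by
    rintro t ⟨y, hy0, hyt⟩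
    have h1 : y ⬝ᵥ (M *ᵥ y) = t * (y ⬝ᵥ y) := by
      rw [hyt]; simp [dotProduct, Finset.mul_sum]
      exact Finset.sum_congr rfl fun i _ => by ring
    have h2 : y ⬝ᵥ (M *ᵥ y) ≤ T * (y ⬝ᵥ y) := by
      rw [hquad, hnorm, Finset.mul_sum]
      exact Finset.sum_le_sum fun i _ => mul_le_mul_of_nonneg_right (hμT i) (sq_nonneg _)
    have h3 := dot_self_pos hy0
    nlinarith
  have hTmem : T ∈ S := by
    obtain ⟨i, _, hi⟩ := Finset.exists_mem_eq_sup' Finset.univ_nonempty μ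
    rw [hT, hi]; exact heig i
  have hsup : specRad M = T :=
    le_antisymm (csSup_le ⟨T, hTmem⟩ hbound) (le_csSup ⟨T, hbound⟩ hTmem)
  intro x hx
  have hq := hquad x
  have hn1 : ∑ i, (star U *ᵥ x) i ^ 2 = 1 := by rw [← hnorm, hx]
  have hle : x ⬝ᵥ (M *ᵥ x) ≤ T := by
    rw [hq]
    calc ∑ i, μ i * (star U *ᵥ x) i ^ 2 ≤ ∑ i, T * (star U *ᵥ x) i ^ 2 :=
          Finset.sum_le_sum fun i _ => mul_le_mul_of_nonneg_right (hμT i) (sq_nonneg _)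
      _ = T := by rw [← Finset.mul_sum, hn1, mul_one]
  constructor
  · rw [hsup]; exact hle
  · intro hge
    rw [hsup] at hge ⊢
    have hqT : x ⬝ᵥ (M *ᵥ x) = T := le_antisymm hle hge
    have hzero : ∑ i, (T - μ i) * (star U *ᵥ x) i ^ 2 = 0 := by
      have e : ∑ i, (T - μ i) * (star U *ᵥ x) i ^ 2
          = T * (∑ i, (star U *ᵥ x) i ^ 2) - ∑ i, μ i * (star U *ᵥ x) i ^ 2 := by
        rw [Finset.mul_sum, ← Finset.sum_sub_distrib]
        exact Finset.sum_congr rfl fun i _ => by ring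
      rw [e, hn1, mul_one, ← hq, hqT, sub_self]
    have hterm : ∀ i ∈ Finset.univ, (T - μ i) * (star U *ᵥ x) i ^ 2 = 0 :=
      (Finset.sum_eq_zero_iff_of_nonneg fun i _ =>
        mul_nonneg (by linarith [hμT i]) (sq_nonneg _)).mp hzero
    have hDc : Matrix.diagonal μ *ᵥ (star U *ᵥ x) = T • (star U *ᵥ x) := by
      ext i
      have := hterm i (Finset.mem_univ i)
      rcases mul_eq_zero.mp this with h | h
      · have hμi : μ i = T := by linarith
        simp [Matrix.mulVec_diagonal, hμi]
      · have h0 : (star U *ᵥ x) i = 0 := by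
          have := sq_eq_zero_iff.mp h; exact this
        simp [Matrix.mulVec_diagonal, h0]
    rw [hMy, hDc, Matrix.mulVec_smul, hrec]
lemma deg_eq_card {V : Type*} [Fintype V] (H : SimpleGraph V) [DecidableRel H.Adj] (w : V) :
    deg H w = (H.neighborFinset w).card := by
  rw [deg, ← Set.ncard_coe_finset]
  congr 1
  exact (Set.coe_toFinset _).symm

lemma deg_switch {V : Type*} [Fintype V] (H H' : SimpleGraph V) (w r a : V)
    (hr : H.Adj w r) (ha : ¬ H.Adj w a) (haw : a ≠ w)
    (hiff : ∀ b, H'.Adj w b ↔ (H.Adj w b ∧ b ≠ r) ∨ b = a) :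
    deg H' w = deg H w := by
  classical
  have hset : H'.neighborFinset w = insert a ((H.neighborFinset w).erase r) := by
    ext b
    simp only [SimpleGraph.mem_neighborFinset, Finset.mem_insert, Finset.mem_erase, hiff]
    tauto
  have hanm : a ∉ (H.neighborFinset w).erase r := fun hmem =>
    ha ((SimpleGraph.mem_neighborFinset H w a).mp (Finset.erase_subset _ _ hmem))
  have hrm : r ∈ H.neighborFinset w := (SimpleGraph.mem_neighborFinset H w r).mpr hr
  rw [deg_eq_card, deg_eq_card, hset, Finset.card_insert_of_notMem hanm,
    Finset.card_erase_of_mem hrm]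
  have : 0 < (H.neighborFinset w).card := Finset.card_pos.mpr ⟨r, hrm⟩
  omega

section main
variable {n : ℕ} (G G' : SimpleGraph (Fin n)) (v₁ u₁ v₂ u₂ : Fin n)
  (h1 : G.Adj v₁ u₁) (h2 : G.Adj v₂ u₂)
  (h3 : ¬ G.Adj v₁ v₂) (h4 : ¬ G.Adj u₁ u₂)
  (h5 : v₁ ≠ v₂) (h6 : u₁ ≠ u₂)
  (hG' : ∀ a b : Fin n, G'.Adj a b ↔
    ((G.Adj a b ∧ ¬ (s(a, b) = s(v₁, u₁) ∨ s(a, b) = s(v₂, u₂))) ∨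
      s(a, b) = s(v₁, v₂) ∨ s(a, b) = s(u₁, u₂)))

include h1 h2 h3 h4 h5 h6 hG' in
lemma deg_all : ∀ w, deg G' w = deg G w := by
  have e12 : v₁ ≠ u₂ := by rintro rfl; exact h3 h2.symm
  have e21 : v₂ ≠ u₁ := by rintro rfl; exact h3 h1
  have e11 : v₁ ≠ u₁ := h1.ne
  have e22 : v₂ ≠ u₂ := h2.ne
  intro w
  by_cases hw1 : w = v₁
  · subst hw1
    refine deg_switch G G' w u₁ v₂ h1 h3 (Ne.symm h5) fun b => ?_
    rw [hG' w b]
    simp only [Sym2.eq_iff]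
    tauto
  · by_cases hw2 : w = u₁
    · subst hw2
      refine deg_switch G G' w v₁ u₂ h1.symm h4 (Ne.symm h6) fun b => ?_
      rw [hG' w b]
      simp only [Sym2.eq_iff]
      tauto
    · by_cases hw3 : w = v₂
      · subst hw3
        refine deg_switch G G' w u₂ v₁ h2 (fun h => h3 h.symm) h5 fun b => ?_
        rw [hG' w b]
        simp only [Sym2.eq_iff]
        tauto
      · by_cases hw4 : w = u₂
        · subst hw4
          refine deg_switch G G' w v₂ u₁ h2.symm (fun h => h4 h.symm) h6 fun b => ?_
          rw [hG' w b]
          simp only [Sym2.eq_iff]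
          tauto
        · have hiff : ∀ b, G'.Adj w b ↔ G.Adj w b := by
            intro b
            rw [hG' w b]
            simp only [Sym2.eq_iff]
            tauto
          have : G'.neighborFinset w = G.neighborFinset w := by
            ext b; simp only [SimpleGraph.mem_neighborFinset, hiff]
          rw [deg_eq_card, deg_eq_card, this]

noncomputable def Bmat {n : ℕ} (v₁ u₁ v₂ u₂ : Fin n) : Matrix (Fin n) (Fin n) ℝ :=
  Matrix.single v₁ v₂ 1 + Matrix.single v₂ v₁ 1 + Matrix.single u₁ u₂ 1 +
    Matrix.single u₂ u₁ 1 - Matrix.single v₁ u₁ 1 - Matrix.single u₁ v₁ 1 -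
    Matrix.single v₂ u₂ 1 - Matrix.single u₂ v₂ 1

include h1 h2 h3 h4 h5 h6 hG' in
lemma Amat_eq (α : ℝ) : Aalpha G' α = Aalpha G α + (1 - α) • Bmat v₁ u₁ v₂ u₂ := by
  have e12 : v₁ ≠ u₂ := by rintro rfl; exact h3 h2.symm
  have e21 : v₂ ≠ u₁ := by rintro rfl; exact h3 h1
  have e11 : v₁ ≠ u₁ := h1.ne
  have e22 : v₂ ≠ u₂ := h2.ne
  have h3' : ¬ G.Adj v₂ v₁ := fun h => h3 h.symm
  have h4' : ¬ G.Adj u₂ u₁ := fun h => h4 h.symm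
  have hdeg := deg_all G G' v₁ u₁ v₂ u₂ h1 h2 h3 h4 h5 h6 hG'
  ext i j
  simp only [Matrix.add_apply, Matrix.smul_apply, smul_eq_mul]
  by_cases hij : i = j
  · subst hij
    have n1 : ¬(v₁ = i ∧ v₂ = i) := fun h => h5 (h.1.trans h.2.symm)
    have n2 : ¬(v₂ = i ∧ v₁ = i) := fun h => h5 (h.2.trans h.1.symm)
    have n3 : ¬(u₁ = i ∧ u₂ = i) := fun h => h6 (h.1.trans h.2.symm)
    have n4 : ¬(u₂ = i ∧ u₁ = i) := fun h => h6 (h.2.trans h.1.symm)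
    have n5 : ¬(v₁ = i ∧ u₁ = i) := fun h => e11 (h.1.trans h.2.symm)
    have n6 : ¬(u₁ = i ∧ v₁ = i) := fun h => e11 (h.2.trans h.1.symm)
    have n7 : ¬(v₂ = i ∧ u₂ = i) := fun h => e22 (h.1.trans h.2.symm)
    have n8 : ¬(u₂ = i ∧ v₂ = i) := fun h => e22 (h.2.trans h.1.symm)
    simp [Aalpha, Bmat, Matrix.single, n1, n2, n3, n4, n5, n6, n7, n8, hdeg i]
  · simp only [Aalpha, if_neg hij]
    by_cases p1 : s(i, j) = s(v₁, u₁)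
    · rcases Sym2.eq_iff.mp p1 with ⟨rfl, rfl⟩ | ⟨rfl, rfl⟩
      · simp [hG', Sym2.eq_iff, Bmat, Matrix.single, h1, h2, h3, h4, h3', h4',
          h1.symm, h2.symm, e11, e22, e12, e21, h5, h6, e11.symm, e22.symm, e12.symm,
          e21.symm, h5.symm, h6.symm]
      · simp [hG', Sym2.eq_iff, Bmat, Matrix.single, h1, h2, h3, h4, h3', h4',
          h1.symm, h2.symm, e11, e22, e12, e21, h5, h6, e11.symm, e22.symm, e12.symm,
          e21.symm, h5.symm, h6.symm]
    · by_cases p2 : s(i, j) = s(v₂, u₂)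
      · rcases Sym2.eq_iff.mp p2 with ⟨rfl, rfl⟩ | ⟨rfl, rfl⟩
        · simp [hG', Sym2.eq_iff, Bmat, Matrix.single, h1, h2, h3, h4, h3', h4',
            h1.symm, h2.symm, e11, e22, e12, e21, h5, h6, e11.symm, e22.symm, e12.symm,
            e21.symm, h5.symm, h6.symm]
        · simp [hG', Sym2.eq_iff, Bmat, Matrix.single, h1, h2, h3, h4, h3', h4',
            h1.symm, h2.symm, e11, e22, e12, e21, h5, h6, e11.symm, e22.symm, e12.symm,
            e21.symm, h5.symm, h6.symm]
      · by_cases p3 : s(i, j) = s(v₁, v₂)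
        · rcases Sym2.eq_iff.mp p3 with ⟨rfl, rfl⟩ | ⟨rfl, rfl⟩
          · simp [hG', Sym2.eq_iff, Bmat, Matrix.single, h1, h2, h3, h4, h3', h4',
              h1.symm, h2.symm, e11, e22, e12, e21, h5, h6, e11.symm, e22.symm, e12.symm,
              e21.symm, h5.symm, h6.symm]
          · simp [hG', Sym2.eq_iff, Bmat, Matrix.single, h1, h2, h3, h4, h3', h4',
              h1.symm, h2.symm, e11, e22, e12, e21, h5, h6, e11.symm, e22.symm, e12.symm,
              e21.symm, h5.symm, h6.symm]
        · by_cases p4 : s(i, j) = s(u₁, u₂)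
          · rcases Sym2.eq_iff.mp p4 with ⟨rfl, rfl⟩ | ⟨rfl, rfl⟩
            · simp [hG', Sym2.eq_iff, Bmat, Matrix.single, h1, h2, h3, h4, h3', h4',
                h1.symm, h2.symm, e11, e22, e12, e21, h5, h6, e11.symm, e22.symm, e12.symm,
                e21.symm, h5.symm, h6.symm]
            · simp [hG', Sym2.eq_iff, Bmat, Matrix.single, h1, h2, h3, h4, h3', h4',
                h1.symm, h2.symm, e11, e22, e12, e21, h5, h6, e11.symm, e22.symm, e12.symm,
                e21.symm, h5.symm, h6.symm]
          · have m1 : ¬(v₁ = i ∧ v₂ = j) := fun h => p3 (Sym2.eq_iff.mpr (Or.inl ⟨h.1.symm, h.2.symm⟩))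
            have m2 : ¬(v₂ = i ∧ v₁ = j) := fun h => p3 (Sym2.eq_iff.mpr (Or.inr ⟨h.1.symm, h.2.symm⟩))
            have m3 : ¬(u₁ = i ∧ u₂ = j) := fun h => p4 (Sym2.eq_iff.mpr (Or.inl ⟨h.1.symm, h.2.symm⟩))
            have m4 : ¬(u₂ = i ∧ u₁ = j) := fun h => p4 (Sym2.eq_iff.mpr (Or.inr ⟨h.1.symm, h.2.symm⟩))
            have m5 : ¬(v₁ = i ∧ u₁ = j) := fun h => p1 (Sym2.eq_iff.mpr (Or.inl ⟨h.1.symm, h.2.symm⟩))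
            have m6 : ¬(u₁ = i ∧ v₁ = j) := fun h => p1 (Sym2.eq_iff.mpr (Or.inr ⟨h.1.symm, h.2.symm⟩))
            have m7 : ¬(v₂ = i ∧ u₂ = j) := fun h => p2 (Sym2.eq_iff.mpr (Or.inl ⟨h.1.symm, h.2.symm⟩))
            have m8 : ¬(u₂ = i ∧ v₂ = j) := fun h => p2 (Sym2.eq_iff.mpr (Or.inr ⟨h.1.symm, h.2.symm⟩))
            simp [hG', p1, p2, p3, p4, Bmat, Matrix.single, m1, m2, m3, m4, m5, m6, m7, m8]
end main

lemma Aalpha_herm {n : ℕ} (G : SimpleGraph (Fin n)) (α : ℝ) : (Aalpha G α).IsHermitian := by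
  ext i j
  simp only [Matrix.conjTranspose_apply, star_trivial, Aalpha]
  by_cases h : i = j
  · simp [h]
  · simp [h, Ne.symm h, SimpleGraph.adj_comm]

lemma dot_update {n : ℕ} (X : Fin n → ℝ) (a : Fin n) (c : ℝ) :
    X ⬝ᵥ (Function.update (0 : Fin n → ℝ) a c) = X a * c := by
  simp [dotProduct, Function.update_apply, mul_ite, Finset.sum_ite_eq]

lemma dot_smul_self {n : ℕ} (c : ℝ) (x : Fin n → ℝ) : x ⬝ᵥ (c • x) = c * (x ⬝ᵥ x) := by
  simp [dotProduct, Finset.mul_sum]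
  exact Finset.sum_congr rfl fun i _ => by ring

lemma dot_B {n : ℕ} (v₁ u₁ v₂ u₂ : Fin n) (X : Fin n → ℝ) :
    X ⬝ᵥ (Bmat v₁ u₁ v₂ u₂ *ᵥ X) = 2 * ((X v₁ - X u₂) * (X v₂ - X u₁)) := by
  simp [Bmat, Matrix.add_mulVec, Matrix.sub_mulVec, Matrix.single_mulVec,
    dotProduct_add, dotProduct_sub, dot_update]
  ring

lemma Brow1 {n : ℕ} {v₁ u₁ v₂ u₂ : Fin n} (X : Fin n → ℝ)
    (e5 : v₁ ≠ v₂) (e11 : v₁ ≠ u₁) (e12 : v₁ ≠ u₂) :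
    (Bmat v₁ u₁ v₂ u₂ *ᵥ X) v₁ = X v₂ - X u₁ := by
  simp [Bmat, Matrix.add_mulVec, Matrix.sub_mulVec, Matrix.single_mulVec,
    Function.update_apply, e5, e11, e12, Ne.symm e5, Ne.symm e11, Ne.symm e12]

lemma Brow2 {n : ℕ} {v₁ u₁ v₂ u₂ : Fin n} (X : Fin n → ℝ)
    (e5 : v₁ ≠ v₂) (e21 : v₂ ≠ u₁) (e22 : v₂ ≠ u₂) :
    (Bmat v₁ u₁ v₂ u₂ *ᵥ X) v₂ = X v₁ - X u₂ := by
  simp [Bmat, Matrix.add_mulVec, Matrix.sub_mulVec, Matrix.single_mulVec,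
    Function.update_apply, e5, e21, e22, Ne.symm e5, Ne.symm e21, Ne.symm e22]

theorem stmt_1 {n : ℕ} (G G' : SimpleGraph (Fin n)) (hG : G.Connected)
    (α : ℝ) (hα0 : 0 ≤ α) (hα1 : α < 1)
    (v₁ u₁ v₂ u₂ : Fin n)
    (h1 : G.Adj v₁ u₁) (h2 : G.Adj v₂ u₂)
    (h3 : ¬ G.Adj v₁ v₂) (h4 : ¬ G.Adj u₁ u₂)
    (h5 : v₁ ≠ v₂) (h6 : u₁ ≠ u₂)
    (hG' : ∀ a b : Fin n, G'.Adj a b ↔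
      ((G.Adj a b ∧ ¬ (s(a, b) = s(v₁, u₁) ∨ s(a, b) = s(v₂, u₂))) ∨
        s(a, b) = s(v₁, v₂) ∨ s(a, b) = s(u₁, u₂)))
    (X : Fin n → ℝ) (hXunit : ∑ i, X i ^ 2 = 1)
    (hXeig : (Aalpha G α) *ᵥ X = specRad (Aalpha G α) • X)
    (hx1 : X u₂ ≤ X v₁) (hx2 : X u₁ ≤ X v₂) :
    specRad (Aalpha G α) ≤ specRad (Aalpha G' α) ∧
    ((X u₂ < X v₁ ∨ X u₁ < X v₂) →
      specRad (Aalpha G α) < specRad (Aalpha G' α)) := by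
  have e12 : v₁ ≠ u₂ := by rintro rfl; exact h3 h2.symm
  have e21 : v₂ ≠ u₁ := by rintro rfl; exact h3 h1
  have e11 : v₁ ≠ u₁ := h1.ne
  have e22 : v₂ ≠ u₂ := h2.ne
  have hn : 0 < n := by
    by_contra h
    push_neg at h
    interval_cases n
    simpa using hXunit
  have hXdot : X ⬝ᵥ X = 1 := by
    simpa [dotProduct, pow_two] using hXunit
  set ρ := specRad (Aalpha G α) with hρ
  set ρ' := specRad (Aalpha G' α) with hρ'
  have hαpos : 0 < 1 - α := by linarith
  have hspecA' := spec_main hn (Aalpha_herm G' α) X hXdot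
  have hXA : X ⬝ᵥ (Aalpha G α *ᵥ X) = ρ := by
    rw [hXeig, dot_smul_self, hXdot, mul_one]
  have hAmat := Amat_eq G G' v₁ u₁ v₂ u₂ h1 h2 h3 h4 h5 h6 hG' α
  have hquadA' : X ⬝ᵥ (Aalpha G' α *ᵥ X)
      = ρ + (1 - α) * (2 * ((X v₁ - X u₂) * (X v₂ - X u₁))) := by
    rw [hAmat, Matrix.add_mulVec, dotProduct_add, hXA, Matrix.smul_mulVec,
      dotProduct_smul, dot_B]
    simp
  have hP : 0 ≤ (X v₁ - X u₂) * (X v₂ - X u₁) :=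
    mul_nonneg (by linarith) (by linarith)
  have hfirst : ρ ≤ ρ' := by
    have := hspecA'.1
    rw [hquadA'] at this
    nlinarith
  refine ⟨hfirst, ?_⟩
  intro hlt
  by_contra hnot
  push_neg at hnot
  have hρeq : ρ' = ρ := le_antisymm hnot hfirst
  by_cases hPpos : 0 < (X v₁ - X u₂) * (X v₂ - X u₁)
  · have := hspecA'.1
    rw [hquadA'] at this
    nlinarith
  · have hP0 : (X v₁ - X u₂) * (X v₂ - X u₁) = 0 := le_antisymm (by linarith [not_lt.mp hPpos]) hP
    have hquad0 : X ⬝ᵥ (Aalpha G' α *ᵥ X) = ρ := by rw [hquadA', hP0]; ring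
    have heig' : Aalpha G' α *ᵥ X = ρ' • X := by
      apply hspecA'.2
      rw [hquad0]
      exact le_of_eq (hρ'.symm.trans hρeq)
    have hAX : Aalpha G' α *ᵥ X = Aalpha G α *ᵥ X := by
      rw [heig', hρeq, ← hXeig]
    have hB0 : (1 - α) • (Bmat v₁ u₁ v₂ u₂ *ᵥ X) = 0 := by
      have h : Aalpha G α *ᵥ X + (1 - α) • (Bmat v₁ u₁ v₂ u₂ *ᵥ X) = Aalpha G α *ᵥ X := by
        rw [← Matrix.smul_mulVec, ← Matrix.add_mulVec, ← hAmat, hAX]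
      exact add_eq_left.mp h
    have hv1 : X v₂ = X u₁ := by
      have h := congrFun hB0 v₁
      simp only [Pi.smul_apply, smul_eq_mul, Pi.zero_apply, Brow1 X h5 e11 e12] at h
      rcases mul_eq_zero.mp h with h' | h'
      · linarith
      · linarith
    have hv2 : X v₁ = X u₂ := by
      have h := congrFun hB0 v₂
      simp only [Pi.smul_apply, smul_eq_mul, Pi.zero_apply, Brow2 X h5 e21 e22] at h
      rcases mul_eq_zero.mp h with h' | h'
      · linarith
      · linarith
    rcases hlt with h | h
    · linarith
    · linarith
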